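/- Let u : Ω ⊂ ℝⁿ → ℝᵐ be C³ and let A denote the second fundamental form of the graph of u. Then there exists a dimensional constant C such that |∇A|_g ≤ |D³u| + C|Du||D²u|² and |D³u| ≤ (1+|Du|²)² |∇A|_g + C|Du||D²u|², where ∇ is the covariant derivative induced on the bundle T*Σ ⊗ T*Σ ⊗ NΣ of the graph Σ and |·|_g is the norm induced by the metric g. -/

import Mathlib

open Finset Matrix Real

section helpers

lemma qf_expand {ι : Type*} [Fintype ι] (M : Matrix ι ι ℝ) (x y : ι → ℝ) :
    x ⬝ᵥ M *ᵥ y = ∑ i, ∑ j, M i j * x i * y j := by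
  simp only [dotProduct, Matrix.mulVec, Finset.mul_sum]
  exact Finset.sum_congr rfl fun i _ => Finset.sum_congr rfl fun j _ => by ring

lemma dp_self_nonneg {ι : Type*} [Fintype ι] (x : ι → ℝ) : 0 ≤ x ⬝ᵥ x :=
  Finset.sum_nonneg fun i _ => mul_self_nonneg _

lemma dp_self_eq_sum_sq {ι : Type*} [Fintype ι] (x : ι → ℝ) : x ⬝ᵥ x = ∑ i, x i ^ 2 := by
  simp [dotProduct, pow_two]

lemma sym_dp_comm {ι : Type*} [Fintype ι] {S : Matrix ι ι ℝ} (hsym : Sᵀ = S) (x y : ι → ℝ) :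
    x ⬝ᵥ S *ᵥ y = y ⬝ᵥ S *ᵥ x := by
  rw [Matrix.dotProduct_mulVec, ← Matrix.mulVec_transpose, hsym, dotProduct_comm]

lemma psd_CS {ι : Type*} [Fintype ι] {S : Matrix ι ι ℝ} (hsym : Sᵀ = S)
    (hpos : ∀ v, 0 ≤ v ⬝ᵥ S *ᵥ v) (x y : ι → ℝ) :
    (x ⬝ᵥ S *ᵥ y) ^ 2 ≤ (x ⬝ᵥ S *ᵥ x) * (y ⬝ᵥ S *ᵥ y) := by
  set a := x ⬝ᵥ S *ᵥ x with ha
  set b := x ⬝ᵥ S *ᵥ y with hb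
  set c := y ⬝ᵥ S *ᵥ y with hc
  have key : ∀ s : ℝ, 0 ≤ a + 2 * s * b + s ^ 2 * c := by
    intro s
    have h := hpos (x + s • y)
    have e : (x + s • y) ⬝ᵥ S *ᵥ (x + s • y) = a + 2 * s * b + s ^ 2 * c := by
      rw [Matrix.mulVec_add, Matrix.mulVec_smul, add_dotProduct, smul_dotProduct,
        dotProduct_add, dotProduct_add, dotProduct_smul,
        dotProduct_smul]
      have := sym_dp_comm hsym y x
      simp only [smul_eq_mul]
      rw [this]
      ring
    rw [e] at h; exact h
  have hc0 : 0 ≤ c := hpos y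
  rcases eq_or_lt_of_le hc0 with hc0' | hc0'
  · have hb0 : b = 0 := by
      by_contra hb0
      have h1 := key (-(a + 1) / (2 * b))
      have e2 : a + 2 * (-(a + 1) / (2 * b)) * b + (-(a + 1) / (2 * b)) ^ 2 * c = -1 := by
        rw [← hc0']
        field_simp
        ring
      rw [e2] at h1; linarith
    have : b ^ 2 ≤ a * c := by rw [hb0, ← hc0']; simp
    exact this
  · have h3 : b ^ 2 / c ≤ a := by linarith [key (-b / c), (by field_simp; ring : a + 2 * (-b / c) * b + (-b / c) ^ 2 * c = a - b ^ 2 / c)]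
    exact (div_le_iff₀ hc0').mp h3



/-- All the facts we need about the inverse of a matrix `S` with `1 ≤ S ≤ (1+t)·1`. -/
lemma inv_bounds {ι : Type*} [Fintype ι] [DecidableEq ι] (S : Matrix ι ι ℝ)
    (hsym : Sᵀ = S) (t : ℝ) (ht : 0 ≤ t)
    (hlo : ∀ x : ι → ℝ, ∑ i, x i ^ 2 ≤ x ⬝ᵥ S *ᵥ x)
    (hhi : ∀ x : ι → ℝ, x ⬝ᵥ S *ᵥ x ≤ (1 + t) * ∑ i, x i ^ 2) :
    (∀ x : ι → ℝ, x ⬝ᵥ S⁻¹ *ᵥ x ≤ ∑ i, x i ^ 2) ∧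
    (∀ x : ι → ℝ, ∑ i, x i ^ 2 ≤ (1 + t) * (x ⬝ᵥ S⁻¹ *ᵥ x)) ∧
    (∀ w : ι → ℝ, ∑ k, (S⁻¹ *ᵥ w) k ^ 2 ≤ ∑ k, w k ^ 2) ∧
    (∃ A : Matrix ι ι ℝ, ∀ i p, S⁻¹ i p = ∑ r, A r i * A r p) := by
  have hherm : S.IsHermitian := by
    rw [Matrix.IsHermitian, conjTranspose_eq_transpose_of_trivial, hsym]
  have hPD : S.PosDef := by
    refine Matrix.PosDef.of_dotProduct_mulVec_pos hherm fun x hx => ?_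
    have h1 : 0 < ∑ i, x i ^ 2 := by
      have : ∃ i, x i ≠ 0 := by
        by_contra h; push_neg at h; exact hx (funext h)
      obtain ⟨i, hi⟩ := this
      exact Finset.sum_pos' (fun j _ => sq_nonneg _) ⟨i, Finset.mem_univ i, by positivity⟩
    simpa using lt_of_lt_of_le h1 (hlo x)
  have hunit : IsUnit S.det := hPD.det_pos.ne'.isUnit
  have hSS : S * S⁻¹ = 1 := Matrix.mul_nonsing_inv S hunit
  have hSS' : S⁻¹ * S = 1 := Matrix.nonsing_inv_mul S hunit
  have hsyminv : (S⁻¹)ᵀ = S⁻¹ := by rw [Matrix.transpose_nonsing_inv, hsym]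
  have hSmv : ∀ w, S *ᵥ (S⁻¹ *ᵥ w) = w := by
    intro w; rw [Matrix.mulVec_mulVec, hSS, Matrix.one_mulVec]
  -- key: y ⬝ S y ≤ |S y|²
  have h1 : ∀ y : ι → ℝ, y ⬝ᵥ S *ᵥ y ≤ (S *ᵥ y) ⬝ᵥ (S *ᵥ y) := by
    intro y
    have e : (S *ᵥ y - y) ⬝ᵥ (S *ᵥ y - y) =
        (S *ᵥ y) ⬝ᵥ (S *ᵥ y) - y ⬝ᵥ (S *ᵥ y) - (y ⬝ᵥ S *ᵥ y - y ⬝ᵥ y) := by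
      rw [sub_dotProduct, dotProduct_sub, dotProduct_sub,
        dotProduct_comm (S *ᵥ y) y]
      try ring
    have hnn : 0 ≤ (S *ᵥ y - y) ⬝ᵥ (S *ᵥ y - y) :=
      Finset.sum_nonneg fun i _ => mul_self_nonneg _
    have h2 := hlo y
    rw [← dp_self_eq_sum_sq] at h2
    rw [e] at hnn
    linarith
  have hup : ∀ x : ι → ℝ, x ⬝ᵥ S⁻¹ *ᵥ x ≤ ∑ i, x i ^ 2 := by
    intro x
    have e1 : x ⬝ᵥ S⁻¹ *ᵥ x = (S⁻¹ *ᵥ x) ⬝ᵥ S *ᵥ (S⁻¹ *ᵥ x) := by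
      calc x ⬝ᵥ S⁻¹ *ᵥ x = (S⁻¹ *ᵥ x) ⬝ᵥ x := dotProduct_comm _ _
      _ = (S⁻¹ *ᵥ x) ⬝ᵥ S *ᵥ (S⁻¹ *ᵥ x) := by rw [hSmv x]
    rw [e1]
    calc (S⁻¹ *ᵥ x) ⬝ᵥ S *ᵥ (S⁻¹ *ᵥ x) ≤ (S *ᵥ (S⁻¹ *ᵥ x)) ⬝ᵥ (S *ᵥ (S⁻¹ *ᵥ x)) := h1 _
    _ = ∑ i, x i ^ 2 := by rw [hSmv x, dp_self_eq_sum_sq]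
  have hpsd : ∀ v, 0 ≤ v ⬝ᵥ S *ᵥ v := fun v =>
    le_trans (Finset.sum_nonneg fun i _ => sq_nonneg _) (hlo v)
  have hinvnn : ∀ x, 0 ≤ x ⬝ᵥ S⁻¹ *ᵥ x := by
    intro x
    have e1 : x ⬝ᵥ S⁻¹ *ᵥ x = (S⁻¹ *ᵥ x) ⬝ᵥ S *ᵥ (S⁻¹ *ᵥ x) := by
      calc x ⬝ᵥ S⁻¹ *ᵥ x = (S⁻¹ *ᵥ x) ⬝ᵥ x := dotProduct_comm _ _
      _ = (S⁻¹ *ᵥ x) ⬝ᵥ S *ᵥ (S⁻¹ *ᵥ x) := by rw [hSmv x]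
    rw [e1]; exact hpsd _
  have hdn : ∀ x : ι → ℝ, ∑ i, x i ^ 2 ≤ (1 + t) * (x ⬝ᵥ S⁻¹ *ᵥ x) := by
    intro x
    have hcs := psd_CS hsym hpsd x (S⁻¹ *ᵥ x)
    have e1 : x ⬝ᵥ S *ᵥ (S⁻¹ *ᵥ x) = ∑ i, x i ^ 2 := by
      rw [hSmv, dp_self_eq_sum_sq]
    have e2 : (S⁻¹ *ᵥ x) ⬝ᵥ S *ᵥ (S⁻¹ *ᵥ x) = x ⬝ᵥ S⁻¹ *ᵥ x := by
      rw [sym_dp_comm hsym, hSmv, dotProduct_comm]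
    rw [e1, e2] at hcs
    have hx2 : 0 ≤ ∑ i, x i ^ 2 := Finset.sum_nonneg fun i _ => sq_nonneg _
    have hhix := hhi x
    have hq := hinvnn x
    rcases eq_or_lt_of_le hx2 with h0 | h0
    · rw [← h0]
      exact mul_nonneg (by linarith) hq
    · have trans2 : (∑ i, x i ^ 2) * (∑ i, x i ^ 2) ≤ ((1 + t) * (x ⬝ᵥ S⁻¹ *ᵥ x)) * (∑ i, x i ^ 2) := by
        nlinarith [mul_le_mul_of_nonneg_right hhix hq]
      exact le_of_mul_le_mul_right trans2 h0
  refine ⟨hup, hdn, ?_, ?_⟩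
  · intro w
    have h4 : (S *ᵥ (S⁻¹ *ᵥ w)) ⬝ᵥ (S *ᵥ (S⁻¹ *ᵥ w)) = ∑ k, w k ^ 2 := by
      rw [hSmv w, dp_self_eq_sum_sq]
    linarith [hlo (S⁻¹ *ᵥ w), h1 (S⁻¹ *ᵥ w), h4]
  · have hpsdinv : (S⁻¹).PosSemidef := hPD.inv.posSemidef
    open scoped MatrixOrder in obtain ⟨B, hB⟩ := CStarAlgebra.nonneg_iff_eq_star_mul_self.mp hpsdinv.nonneg
    refine ⟨B, fun i p => ?_⟩
    rw [hB]
    simp [Matrix.mul_apply, Matrix.conjTranspose_apply]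


/-- Base: contraction of two vectors with `M = AᵀA`. -/
lemma gram_base {α : Type*} [Fintype α]
    (M A : Matrix α α ℝ) (hMA : ∀ i p, M i p = ∑ r, A r i * A r p) :
    ∀ x y : α → ℝ, ∑ i, ∑ p, M i p * (x i * y p)
      = ∑ r, (∑ i, A r i * x i) * (∑ p, A r p * y p) := by
  intro x y
  calc ∑ i, ∑ p, M i p * (x i * y p)
      = ∑ i, ∑ p, ∑ r, (A r i * x i) * (A r p * y p) := by
        refine Finset.sum_congr rfl fun i _ => Finset.sum_congr rfl fun p _ => ?_
        rw [hMA, Finset.sum_mul]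
        exact Finset.sum_congr rfl fun r _ => by ring
    _ = ∑ i, ∑ r, ∑ p, (A r i * x i) * (A r p * y p) :=
        Finset.sum_congr rfl fun i _ => Finset.sum_comm
    _ = ∑ r, ∑ i, ∑ p, (A r i * x i) * (A r p * y p) := Finset.sum_comm
    _ = ∑ r, (∑ i, A r i * x i) * (∑ p, A r p * y p) :=
        Finset.sum_congr rfl fun r _ => (Finset.sum_mul_sum _ _ _ _).symm

/-- Base level of the Gram recursion. -/
lemma level0 {α : Type*} [Fintype α]
    (M A : Matrix α α ℝ) (hMA : ∀ i p, M i p = ∑ r, A r i * A r p)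
    (lam : ℝ)
    (hloM : ∀ v : α → ℝ, lam * ∑ i, v i ^ 2 ≤ ∑ i, ∑ p, M i p * (v i * v p))
    (hhiM : ∀ v : α → ℝ, ∑ i, ∑ p, M i p * (v i * v p) ≤ ∑ i, v i ^ 2)
    (L : (α → ℝ) → α → ℝ) (hL : ∀ x r, L x r = ∑ i, A r i * x i) :
    (∀ x y : α → ℝ, ∑ i, ∑ p, M i p * (x i * y p) = ∑ r, L x r * L y r) ∧
    (∀ x : α → ℝ, lam * ∑ i, x i ^ 2 ≤ ∑ r, L x r ^ 2) ∧
    (∀ x : α → ℝ, ∑ r, L x r ^ 2 ≤ ∑ i, x i ^ 2) := by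
  have hid : ∀ x y : α → ℝ, ∑ i, ∑ p, M i p * (x i * y p) = ∑ r, L x r * L y r := by
    intro x y
    rw [gram_base M A hMA x y]
    exact Finset.sum_congr rfl fun r _ => by rw [hL, hL]
  have he : ∀ x : α → ℝ, ∑ r, L x r ^ 2 = ∑ i, ∑ p, M i p * (x i * x p) := by
    intro x
    rw [show ∑ r, L x r ^ 2 = ∑ r, L x r * L x r from
      Finset.sum_congr rfl fun r _ => by ring, ← hid x x]
  exact ⟨hid, fun x => (he x).symm ▸ hloM x, fun x => (he x).symm ▸ hhiM x⟩

/-- One level of the Gram recursion. -/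
lemma level {α κ V : Type*} [Fintype α] [Fintype κ]
    (M A : Matrix α α ℝ) (hMA : ∀ i p, M i p = ∑ r, A r i * A r p)
    (lam c : ℝ) (hlam : 0 ≤ lam)
    (hloM : ∀ v : α → ℝ, lam * ∑ i, v i ^ 2 ≤ ∑ i, ∑ p, M i p * (v i * v p))
    (hhiM : ∀ v : α → ℝ, ∑ i, ∑ p, M i p * (v i * v p) ≤ ∑ i, v i ^ 2)
    (L : V → κ → ℝ) (ns : V → ℝ)
    (hLlo : ∀ v, c * ns v ≤ ∑ t, L v t ^ 2) (hLhi : ∀ v, ∑ t, L v t ^ 2 ≤ ns v)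
    (L' : (α → V) → α × κ → ℝ)
    (hL' : ∀ x rt, L' x rt = ∑ i, A rt.1 i * L (x i) rt.2) :
    (∀ x y : α → V, ∑ i, ∑ p, M i p * (∑ t, L (x i) t * L (y p) t)
        = ∑ rt, L' x rt * L' y rt) ∧
    (∀ x : α → V, (lam * c) * ∑ i, ns (x i) ≤ ∑ rt, L' x rt ^ 2) ∧
    (∀ x : α → V, ∑ rt, L' x rt ^ 2 ≤ ∑ i, ns (x i)) := by
  have hid : ∀ x y : α → V, ∑ i, ∑ p, M i p * (∑ t, L (x i) t * L (y p) t)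
      = ∑ rt, L' x rt * L' y rt := by
    intro x y
    calc ∑ i, ∑ p, M i p * (∑ t, L (x i) t * L (y p) t)
        = ∑ i, ∑ p, ∑ t, M i p * (L (x i) t * L (y p) t) := by
          refine Finset.sum_congr rfl fun i _ => Finset.sum_congr rfl fun p _ => ?_
          rw [Finset.mul_sum]
      _ = ∑ i, ∑ t, ∑ p, M i p * (L (x i) t * L (y p) t) :=
          Finset.sum_congr rfl fun i _ => Finset.sum_comm
      _ = ∑ t, ∑ i, ∑ p, M i p * (L (x i) t * L (y p) t) := Finset.sum_comm
      _ = ∑ t, ∑ r, (∑ i, A r i * L (x i) t) * (∑ p, A r p * L (y p) t) :=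
          Finset.sum_congr rfl fun t _ =>
            gram_base M A hMA (fun i => L (x i) t) (fun p => L (y p) t)
      _ = ∑ r, ∑ t, (∑ i, A r i * L (x i) t) * (∑ p, A r p * L (y p) t) := Finset.sum_comm
      _ = ∑ rt : α × κ, (∑ i, A rt.1 i * L (x i) rt.2) * (∑ p, A rt.1 p * L (y p) rt.2) := by
          rw [Fintype.sum_prod_type]
      _ = ∑ rt, L' x rt * L' y rt := by
          refine Finset.sum_congr rfl fun rt _ => ?_
          rw [hL', hL']
  have he : ∀ x : α → V, ∑ rt, L' x rt ^ 2
      = ∑ t, ∑ i, ∑ p, M i p * (L (x i) t * L (x p) t) := by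
    intro x
    rw [show ∑ rt, L' x rt ^ 2 = ∑ rt, L' x rt * L' x rt from
      Finset.sum_congr rfl fun rt _ => by ring, ← hid x x]
    calc ∑ i, ∑ p, M i p * (∑ t, L (x i) t * L (x p) t)
        = ∑ i, ∑ p, ∑ t, M i p * (L (x i) t * L (x p) t) := by
          refine Finset.sum_congr rfl fun i _ => Finset.sum_congr rfl fun p _ => ?_
          rw [Finset.mul_sum]
      _ = ∑ i, ∑ t, ∑ p, M i p * (L (x i) t * L (x p) t) :=
          Finset.sum_congr rfl fun i _ => Finset.sum_comm
      _ = ∑ t, ∑ i, ∑ p, M i p * (L (x i) t * L (x p) t) := Finset.sum_comm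
  refine ⟨hid, ?_, ?_⟩
  · intro x
    rw [he x]
    calc lam * c * ∑ i, ns (x i) = lam * ∑ i, c * ns (x i) := by
          rw [mul_assoc, Finset.mul_sum]
      _ ≤ lam * ∑ i, ∑ t, L (x i) t ^ 2 :=
          mul_le_mul_of_nonneg_left (Finset.sum_le_sum fun i _ => hLlo (x i)) hlam
      _ = lam * ∑ t, ∑ i, L (x i) t ^ 2 := by rw [Finset.sum_comm]
      _ = ∑ t, lam * ∑ i, L (x i) t ^ 2 := Finset.mul_sum _ _ _
      _ ≤ ∑ t, ∑ i, ∑ p, M i p * (L (x i) t * L (x p) t) :=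
          Finset.sum_le_sum fun t _ => hloM (fun i => L (x i) t)
  · intro x
    rw [he x]
    calc ∑ t, ∑ i, ∑ p, M i p * (L (x i) t * L (x p) t)
        ≤ ∑ t, ∑ i, L (x i) t ^ 2 :=
          Finset.sum_le_sum fun t _ => hhiM (fun i => L (x i) t)
      _ = ∑ i, ∑ t, L (x i) t ^ 2 := Finset.sum_comm
      _ ≤ ∑ i, ns (x i) := Finset.sum_le_sum fun i _ => hLhi (x i)

/-- The four-fold contracted quadratic form is comparable to the Euclidean norm. -/
lemma kron4 {n m : ℕ}
    (M : Matrix (Fin n) (Fin n) ℝ) (N : Matrix (Fin m) (Fin m) ℝ)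
    (AM : Matrix (Fin n) (Fin n) ℝ) (AN : Matrix (Fin m) (Fin m) ℝ)
    (hM : ∀ i p, M i p = ∑ r, AM r i * AM r p)
    (hN : ∀ a b, N a b = ∑ r, AN r a * AN r b)
    (lam : ℝ) (hlam : 0 ≤ lam)
    (hloM : ∀ v : Fin n → ℝ, lam * ∑ i, v i ^ 2 ≤ ∑ i, ∑ p, M i p * (v i * v p))
    (hhiM : ∀ v : Fin n → ℝ, ∑ i, ∑ p, M i p * (v i * v p) ≤ ∑ i, v i ^ 2)
    (hloN : ∀ v : Fin m → ℝ, lam * ∑ a, v a ^ 2 ≤ ∑ a, ∑ b, N a b * (v a * v b))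
    (hhiN : ∀ v : Fin m → ℝ, ∑ a, ∑ b, N a b * (v a * v b) ≤ ∑ a, v a ^ 2)
    (T : Fin m → Fin n → Fin n → Fin n → ℝ) :
    lam ^ 4 * (∑ a, ∑ i, ∑ j, ∑ k, T a i j k ^ 2)
      ≤ (∑ a, ∑ b, N a b * (∑ i, ∑ p, M i p * (∑ j, ∑ q, M j q *
          (∑ k, ∑ l, M k l * (T a i j k * T b p q l))))) ∧
    (∑ a, ∑ b, N a b * (∑ i, ∑ p, M i p * (∑ j, ∑ q, M j q *
        (∑ k, ∑ l, M k l * (T a i j k * T b p q l)))))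
      ≤ ∑ a, ∑ i, ∑ j, ∑ k, T a i j k ^ 2 := by
  classical
  set L1 : (Fin n → ℝ) → Fin n → ℝ := fun x r => ∑ i, AM r i * x i with hL1def
  obtain ⟨h1, h1lo, h1hi⟩ := level0 M AM hM lam hloM hhiM L1 (fun _ _ => rfl)
  set L2 : (Fin n → Fin n → ℝ) → Fin n × Fin n → ℝ :=
    fun x rt => ∑ i, AM rt.1 i * L1 (x i) rt.2 with hL2def
  obtain ⟨h2, h2lo, h2hi⟩ := level M AM hM lam lam hlam hloM hhiM L1
    (fun x => ∑ i, x i ^ 2) h1lo h1hi L2 (fun _ _ => rfl)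
  set L3 : (Fin n → Fin n → Fin n → ℝ) → Fin n × (Fin n × Fin n) → ℝ :=
    fun x rt => ∑ i, AM rt.1 i * L2 (x i) rt.2 with hL3def
  obtain ⟨h3, h3lo, h3hi⟩ := level M AM hM lam (lam * lam) hlam hloM hhiM L2
    (fun x => ∑ i, ∑ j, x i j ^ 2) h2lo h2hi L3 (fun _ _ => rfl)
  set L4 : (Fin m → Fin n → Fin n → Fin n → ℝ) → Fin m × (Fin n × (Fin n × Fin n)) → ℝ :=
    fun x rt => ∑ a, AN rt.1 a * L3 (x a) rt.2 with hL4def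
  obtain ⟨h4, h4lo, h4hi⟩ := level N AN hN lam (lam * (lam * lam)) hlam hloN hhiN L3
    (fun x => ∑ i, ∑ j, ∑ k, x i j k ^ 2) h3lo h3hi L4 (fun _ _ => rfl)
  have hQ : (∑ a, ∑ b, N a b * (∑ i, ∑ p, M i p * (∑ j, ∑ q, M j q *
      (∑ k, ∑ l, M k l * (T a i j k * T b p q l)))))
      = ∑ rt, L4 T rt * L4 T rt := by
    calc (∑ a, ∑ b, N a b * (∑ i, ∑ p, M i p * (∑ j, ∑ q, M j q *
        (∑ k, ∑ l, M k l * (T a i j k * T b p q l)))))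
        = ∑ a, ∑ b, N a b * (∑ i, ∑ p, M i p * (∑ j, ∑ q, M j q *
            (∑ t, L1 (T a i j) t * L1 (T b p q) t))) := by
          refine Finset.sum_congr rfl fun a _ => Finset.sum_congr rfl fun b _ => ?_
          congr 1
          refine Finset.sum_congr rfl fun i _ => Finset.sum_congr rfl fun p _ => ?_
          congr 1
          refine Finset.sum_congr rfl fun j _ => Finset.sum_congr rfl fun q _ => ?_
          congr 1
          exact h1 (T a i j) (T b p q)
      _ = ∑ a, ∑ b, N a b * (∑ i, ∑ p, M i p * (∑ t, L2 (T a i) t * L2 (T b p) t)) := by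
          refine Finset.sum_congr rfl fun a _ => Finset.sum_congr rfl fun b _ => ?_
          congr 1
          refine Finset.sum_congr rfl fun i _ => Finset.sum_congr rfl fun p _ => ?_
          congr 1
          exact h2 (T a i) (T b p)
      _ = ∑ a, ∑ b, N a b * (∑ t, L3 (T a) t * L3 (T b) t) := by
          refine Finset.sum_congr rfl fun a _ => Finset.sum_congr rfl fun b _ => ?_
          congr 1
          exact h3 (T a) (T b)
      _ = ∑ rt, L4 T rt * L4 T rt := h4 T T
  have hsq : ∑ rt, L4 T rt * L4 T rt = ∑ rt, L4 T rt ^ 2 :=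
    Finset.sum_congr rfl fun rt _ => by ring
  constructor
  · rw [hQ, hsq]
    have := h4lo T
    calc lam ^ 4 * (∑ a, ∑ i, ∑ j, ∑ k, T a i j k ^ 2)
        = lam * (lam * (lam * lam)) * ∑ a, ∑ i, ∑ j, ∑ k, T a i j k ^ 2 := by ring
      _ ≤ ∑ rt, L4 T rt ^ 2 := h4lo T
  · rw [hQ, hsq]
    exact h4hi T



lemma metric_bounds {ι β : Type*} [Fintype ι] [Fintype β] [DecidableEq ι]
    (P : ι → β → ℝ) (G : Matrix ι ι ℝ)
    (hG : ∀ i j, G i j = (if i = j then (1:ℝ) else 0) + ∑ b, P i b * P j b) :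
    Gᵀ = G ∧ (∀ x : ι → ℝ, ∑ i, x i ^ 2 ≤ x ⬝ᵥ G *ᵥ x) ∧
    (∀ x : ι → ℝ, x ⬝ᵥ G *ᵥ x ≤ (1 + ∑ i, ∑ b, P i b ^ 2) * ∑ i, x i ^ 2) := by
  have hsym : Gᵀ = G := by
    ext i j
    simp only [Matrix.transpose_apply, hG]
    congr 1
    · simp [eq_comm]
    · exact Finset.sum_congr rfl fun b _ => mul_comm _ _
  have hqf : ∀ x : ι → ℝ, x ⬝ᵥ G *ᵥ x
      = (∑ i, x i ^ 2) + ∑ b, (∑ i, P i b * x i) ^ 2 := by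
    intro x
    rw [qf_expand]
    calc ∑ i, ∑ j, G i j * x i * x j
        = ∑ i, ∑ j, ((if i = j then (1:ℝ) else 0) * x i * x j
            + ∑ b, (P i b * x i) * (P j b * x j)) := by
          refine Finset.sum_congr rfl fun i _ => Finset.sum_congr rfl fun j _ => ?_
          rw [hG, add_mul, add_mul, Finset.sum_mul, Finset.sum_mul]
          congr 1
          exact Finset.sum_congr rfl fun b _ => by ring
      _ = (∑ i, ∑ j, (if i = j then (1:ℝ) else 0) * x i * x j)
            + ∑ i, ∑ j, ∑ b, (P i b * x i) * (P j b * x j) := by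
          rw [← Finset.sum_add_distrib]
          refine Finset.sum_congr rfl fun i _ => ?_
          rw [← Finset.sum_add_distrib]
      _ = (∑ i, x i ^ 2) + ∑ b, (∑ i, P i b * x i) ^ 2 := by
          congr 1
          · refine Finset.sum_congr rfl fun i _ => ?_
            simp [ite_mul, Finset.sum_ite_eq, pow_two]
          · calc ∑ i, ∑ j, ∑ b, (P i b * x i) * (P j b * x j)
                = ∑ i, ∑ b, ∑ j, (P i b * x i) * (P j b * x j) :=
                  Finset.sum_congr rfl fun i _ => Finset.sum_comm
              _ = ∑ b, ∑ i, ∑ j, (P i b * x i) * (P j b * x j) := Finset.sum_comm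
              _ = ∑ b, (∑ i, P i b * x i) ^ 2 := by
                  refine Finset.sum_congr rfl fun b _ => ?_
                  rw [pow_two, Finset.sum_mul_sum]
  refine ⟨hsym, ?_, ?_⟩
  · intro x
    rw [hqf]
    have : 0 ≤ ∑ b, (∑ i, P i b * x i) ^ 2 := Finset.sum_nonneg fun b _ => sq_nonneg _
    linarith
  · intro x
    rw [hqf]
    have hcs : ∑ b, (∑ i, P i b * x i) ^ 2
        ≤ (∑ i, ∑ b, P i b ^ 2) * ∑ i, x i ^ 2 := by
      calc ∑ b, (∑ i, P i b * x i) ^ 2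
          ≤ ∑ b, (∑ i, P i b ^ 2) * (∑ i, x i ^ 2) :=
            Finset.sum_le_sum fun b _ =>
              Finset.sum_mul_sq_le_sq_mul_sq Finset.univ (fun i => P i b) x
        _ = (∑ b, ∑ i, P i b ^ 2) * ∑ i, x i ^ 2 := by rw [Finset.sum_mul]
        _ = (∑ i, ∑ b, P i b ^ 2) * ∑ i, x i ^ 2 := by rw [Finset.sum_comm]
    have hx : 0 ≤ ∑ i, x i ^ 2 := Finset.sum_nonneg fun i _ => sq_nonneg _
    nlinarith [hcs]


/-- Bound on Christoffel-type contractions. -/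
lemma gamma_bound {ι κ σ : Type*} [Fintype ι] [Fintype κ] [Fintype σ]
    (Sinv : Matrix ι ι ℝ)
    (hmv : ∀ w : ι → ℝ, ∑ k, (Sinv *ᵥ w) k ^ 2 ≤ ∑ k, w k ^ 2)
    (D : σ → κ → ℝ) (Dv : ι → κ → ℝ) (Γ : σ → ι → ℝ)
    (hΓ : ∀ s k, Γ s k = ∑ l, Sinv k l * (∑ a, D s a * Dv l a)) :
    ∑ s, ∑ k, Γ s k ^ 2 ≤ (∑ l, ∑ a, Dv l a ^ 2) * ∑ s, ∑ a, D s a ^ 2 := by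
  have step1 : ∀ s, ∑ k, Γ s k ^ 2 ≤ ∑ l, (∑ a, D s a * Dv l a) ^ 2 := by
    intro s
    have e : ∀ k, Γ s k = (Sinv *ᵥ (fun l => ∑ a, D s a * Dv l a)) k := by
      intro k
      rw [hΓ]
      simp [Matrix.mulVec, dotProduct]
    calc ∑ k, Γ s k ^ 2 = ∑ k, (Sinv *ᵥ (fun l => ∑ a, D s a * Dv l a)) k ^ 2 :=
          Finset.sum_congr rfl fun k _ => by rw [e]
      _ ≤ ∑ l, (∑ a, D s a * Dv l a) ^ 2 := hmv _
  calc ∑ s, ∑ k, Γ s k ^ 2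
      ≤ ∑ s, ∑ l, (∑ a, D s a * Dv l a) ^ 2 := Finset.sum_le_sum fun s _ => step1 s
    _ ≤ ∑ s, ∑ l, (∑ a, D s a ^ 2) * (∑ a, Dv l a ^ 2) :=
        Finset.sum_le_sum fun s _ => Finset.sum_le_sum fun l _ =>
          Finset.sum_mul_sq_le_sq_mul_sq Finset.univ (fun a => D s a) (fun a => Dv l a)
    _ = ∑ s, (∑ a, D s a ^ 2) * (∑ l, ∑ a, Dv l a ^ 2) := by
        refine Finset.sum_congr rfl fun s _ => ?_
        rw [Finset.mul_sum]
    _ = (∑ l, ∑ a, Dv l a ^ 2) * ∑ s, ∑ a, D s a ^ 2 := by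
        rw [← Finset.sum_mul, mul_comm]


lemma sqrt_sum_sq_add_le {ι : Type*} [Fintype ι] (f g : ι → ℝ) :
    Real.sqrt (∑ i, (f i + g i) ^ 2)
      ≤ Real.sqrt (∑ i, f i ^ 2) + Real.sqrt (∑ i, g i ^ 2) := by
  have h := norm_add_le (E := EuclideanSpace ℝ ι) (WithLp.toLp 2 f) (WithLp.toLp 2 g)
  simp only [EuclideanSpace.norm_eq, Real.norm_eq_abs, sq_abs] at h
  simpa using h

lemma flat4 {β₁ β₂ β₃ β₄ : Type*} [Fintype β₁] [Fintype β₂] [Fintype β₃] [Fintype β₄]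
    (f : β₁ → β₂ → β₃ → β₄ → ℝ) :
    ∑ x : β₁ × β₂ × β₃ × β₄, f x.1 x.2.1 x.2.2.1 x.2.2.2
      = ∑ a, ∑ i, ∑ j, ∑ k, f a i j k := by
  rw [Fintype.sum_prod_type]
  refine Finset.sum_congr rfl fun a _ => ?_
  rw [Fintype.sum_prod_type]
  refine Finset.sum_congr rfl fun i _ => ?_
  rw [Fintype.sum_prod_type]

lemma N4_triangle4 {β₁ β₂ β₃ β₄ : Type*} [Fintype β₁] [Fintype β₂] [Fintype β₃] [Fintype β₄]
    (f g h1 h2 h3 : β₁ → β₂ → β₃ → β₄ → ℝ)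
    (hf : ∀ a i j k, f a i j k = g a i j k + h1 a i j k + h2 a i j k + h3 a i j k) :
    Real.sqrt (∑ a, ∑ i, ∑ j, ∑ k, f a i j k ^ 2)
      ≤ Real.sqrt (∑ a, ∑ i, ∑ j, ∑ k, g a i j k ^ 2)
        + Real.sqrt (∑ a, ∑ i, ∑ j, ∑ k, h1 a i j k ^ 2)
        + Real.sqrt (∑ a, ∑ i, ∑ j, ∑ k, h2 a i j k ^ 2)
        + Real.sqrt (∑ a, ∑ i, ∑ j, ∑ k, h3 a i j k ^ 2) := by
  set τ := β₁ × β₂ × β₃ × β₄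
  set F : τ → ℝ := fun x => f x.1 x.2.1 x.2.2.1 x.2.2.2 with hF
  set G : τ → ℝ := fun x => g x.1 x.2.1 x.2.2.1 x.2.2.2 with hG
  set H1 : τ → ℝ := fun x => h1 x.1 x.2.1 x.2.2.1 x.2.2.2 with hH1
  set H2 : τ → ℝ := fun x => h2 x.1 x.2.1 x.2.2.1 x.2.2.2 with hH2
  set H3 : τ → ℝ := fun x => h3 x.1 x.2.1 x.2.2.1 x.2.2.2 with hH3
  have e0 : ∀ x : τ, F x = G x + (H1 x + (H2 x + H3 x)) := fun x => by
    simp only [hF, hG, hH1, hH2, hH3]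
    rw [hf]; ring
  have t1 : Real.sqrt (∑ x, F x ^ 2)
      ≤ Real.sqrt (∑ x, G x ^ 2) + Real.sqrt (∑ x, (H1 x + (H2 x + H3 x)) ^ 2) := by
    have : (∑ x, F x ^ 2) = ∑ x, (G x + (H1 x + (H2 x + H3 x))) ^ 2 :=
      Finset.sum_congr rfl fun x _ => by rw [e0]
    rw [this]
    exact sqrt_sum_sq_add_le G _
  have t2 : Real.sqrt (∑ x, (H1 x + (H2 x + H3 x)) ^ 2)
      ≤ Real.sqrt (∑ x, H1 x ^ 2) + Real.sqrt (∑ x, (H2 x + H3 x) ^ 2) :=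
    sqrt_sum_sq_add_le H1 _
  have t3 : Real.sqrt (∑ x, (H2 x + H3 x) ^ 2)
      ≤ Real.sqrt (∑ x, H2 x ^ 2) + Real.sqrt (∑ x, H3 x ^ 2) :=
    sqrt_sum_sq_add_le H2 H3
  have eF := flat4 (fun a i j k => f a i j k ^ 2)
  have eG := flat4 (fun a i j k => g a i j k ^ 2)
  have eH1 := flat4 (fun a i j k => h1 a i j k ^ 2)
  have eH2 := flat4 (fun a i j k => h2 a i j k ^ 2)
  have eH3 := flat4 (fun a i j k => h3 a i j k ^ 2)
  rw [← eF, ← eG, ← eH1, ← eH2, ← eH3]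
  calc Real.sqrt (∑ x, F x ^ 2)
      ≤ Real.sqrt (∑ x, G x ^ 2) + Real.sqrt (∑ x, (H1 x + (H2 x + H3 x)) ^ 2) := t1
    _ ≤ _ := by linarith [t2, t3, Real.sqrt_nonneg (∑ x, G x ^ 2)]

/-- factorization patterns -/
lemma sum4_factor1 {β₁ β₂ β₃ β₄ : Type*} [Fintype β₁] [Fintype β₂] [Fintype β₃] [Fintype β₄]
    (U : β₄ → β₂ → ℝ) (V : β₃ → β₁ → ℝ) :
    ∑ a : β₁, ∑ i : β₂, ∑ j : β₃, ∑ k : β₄, U k i * V j a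
      = (∑ k, ∑ i, U k i) * (∑ j, ∑ a, V j a) := by
  calc ∑ a : β₁, ∑ i : β₂, ∑ j : β₃, ∑ k : β₄, U k i * V j a
      = ∑ a : β₁, ∑ i : β₂, ∑ j : β₃, (∑ k, U k i) * V j a := by
        refine Finset.sum_congr rfl fun a _ => Finset.sum_congr rfl fun i _ =>
          Finset.sum_congr rfl fun j _ => (Finset.sum_mul _ _ _).symm
    _ = ∑ a : β₁, ∑ i : β₂, (∑ k, U k i) * ∑ j, V j a := by
        refine Finset.sum_congr rfl fun a _ => Finset.sum_congr rfl fun i _ =>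
          (Finset.mul_sum _ _ _).symm
    _ = ∑ a : β₁, (∑ i, ∑ k, U k i) * ∑ j, V j a := by
        refine Finset.sum_congr rfl fun a _ => (Finset.sum_mul _ _ _).symm
    _ = (∑ i, ∑ k, U k i) * ∑ a, ∑ j, V j a := (Finset.mul_sum _ _ _).symm
    _ = (∑ k, ∑ i, U k i) * (∑ j, ∑ a, V j a) := by
        rw [Finset.sum_comm (f := fun i k => U k i),
          Finset.sum_comm (f := fun a j => V j a)]

lemma sum4_factor2 {β₁ β₂ β₃ β₄ : Type*} [Fintype β₁] [Fintype β₂] [Fintype β₃] [Fintype β₄]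
    (U : β₄ → β₃ → ℝ) (V : β₂ → β₁ → ℝ) :
    ∑ a : β₁, ∑ i : β₂, ∑ j : β₃, ∑ k : β₄, U k j * V i a
      = (∑ k, ∑ j, U k j) * (∑ i, ∑ a, V i a) := by
  calc ∑ a : β₁, ∑ i : β₂, ∑ j : β₃, ∑ k : β₄, U k j * V i a
      = ∑ a : β₁, ∑ i : β₂, ∑ j : β₃, (∑ k, U k j) * V i a := by
        refine Finset.sum_congr rfl fun a _ => Finset.sum_congr rfl fun i _ =>
          Finset.sum_congr rfl fun j _ => (Finset.sum_mul _ _ _).symm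
    _ = ∑ a : β₁, ∑ i : β₂, (∑ j, ∑ k, U k j) * V i a := by
        refine Finset.sum_congr rfl fun a _ => Finset.sum_congr rfl fun i _ => ?_
        rw [Finset.sum_mul]
    _ = ∑ a : β₁, (∑ j, ∑ k, U k j) * ∑ i, V i a := by
        refine Finset.sum_congr rfl fun a _ => (Finset.mul_sum _ _ _).symm
    _ = (∑ j, ∑ k, U k j) * ∑ a, ∑ i, V i a := (Finset.mul_sum _ _ _).symm
    _ = (∑ k, ∑ j, U k j) * (∑ i, ∑ a, V i a) := by
        rw [Finset.sum_comm (f := fun j k => U k j),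
          Finset.sum_comm (f := fun a i => V i a)]

lemma sum4_factor3 {β₁ β₂ β₃ β₄ : Type*} [Fintype β₁] [Fintype β₂] [Fintype β₃] [Fintype β₄]
    (U : β₄ → β₁ → ℝ) (V : β₂ → β₃ → ℝ) :
    ∑ a : β₁, ∑ i : β₂, ∑ j : β₃, ∑ k : β₄, U k a * V i j
      = (∑ k, ∑ a, U k a) * (∑ i, ∑ j, V i j) := by
  calc ∑ a : β₁, ∑ i : β₂, ∑ j : β₃, ∑ k : β₄, U k a * V i j
      = ∑ a : β₁, ∑ i : β₂, ∑ j : β₃, (∑ k, U k a) * V i j := by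
        refine Finset.sum_congr rfl fun a _ => Finset.sum_congr rfl fun i _ =>
          Finset.sum_congr rfl fun j _ => (Finset.sum_mul _ _ _).symm
    _ = ∑ a : β₁, ∑ i : β₂, (∑ k, U k a) * ∑ j, V i j := by
        refine Finset.sum_congr rfl fun a _ => Finset.sum_congr rfl fun i _ =>
          (Finset.mul_sum _ _ _).symm
    _ = ∑ a : β₁, (∑ k, U k a) * ∑ i, ∑ j, V i j :=
        Finset.sum_congr rfl fun a _ => (Finset.mul_sum _ _ _).symm
    _ = (∑ a, ∑ k, U k a) * (∑ i, ∑ j, V i j) := (Finset.sum_mul _ _ _).symm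
    _ = (∑ k, ∑ a, U k a) * (∑ i, ∑ j, V i j) := by
        rw [Finset.sum_comm (f := fun a k => U k a)]

end helpers

lemma qf_expand2 {ι : Type*} [Fintype ι] (M : Matrix ι ι ℝ) (x : ι → ℝ) :
    x ⬝ᵥ M *ᵥ x = ∑ i, ∑ p, M i p * (x i * x p) := by
  rw [qf_expand]
  exact Finset.sum_congr rfl fun i _ => Finset.sum_congr rfl fun p _ => by ring


lemma assemble1 (Q NA sD3 E1 E2 E3 B1 B2 : ℝ)
    (hQNA : Q ≤ NA)
    (htri : Real.sqrt NA ≤ sD3 + Real.sqrt E1 + Real.sqrt E2 + Real.sqrt E3)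
    (h1 : Real.sqrt E1 ≤ B1 * B2) (h2 : Real.sqrt E2 ≤ B1 * B2)
    (h3 : Real.sqrt E3 ≤ B1 * B2) :
    Real.sqrt Q ≤ sD3 + 3 * B1 * B2 := by
  have := Real.sqrt_le_sqrt hQNA
  linarith

lemma assemble2 (Q NA sD3 E1 E2 E3 B1 B2 s : ℝ) (hs : 0 < s)
    (hQNA : (s⁻¹) ^ 4 * NA ≤ Q)
    (htri : sD3 ≤ Real.sqrt NA + Real.sqrt E1 + Real.sqrt E2 + Real.sqrt E3)
    (h1 : Real.sqrt E1 ≤ B1 * B2) (h2 : Real.sqrt E2 ≤ B1 * B2)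
    (h3 : Real.sqrt E3 ≤ B1 * B2) :
    sD3 ≤ s ^ 2 * Real.sqrt Q + 3 * B1 * B2 := by
  have hNAle : NA ≤ s ^ 4 * Q := by
    have e : NA = s ^ 4 * ((s⁻¹) ^ 4 * NA) := by
      field_simp
    rw [e]
    exact mul_le_mul_of_nonneg_left hQNA (by positivity)
  have h4 : Real.sqrt NA ≤ s ^ 2 * Real.sqrt Q := by
    calc Real.sqrt NA ≤ Real.sqrt (s ^ 4 * Q) := Real.sqrt_le_sqrt hNAle
      _ = s ^ 2 * Real.sqrt Q := by
        rw [Real.sqrt_mul (by positivity) Q, show s ^ 4 = (s ^ 2) ^ 2 by ring,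
          Real.sqrt_sq (by positivity)]
  linarith

set_option maxHeartbeats 2000000 in
/-- `|∇A|_g ≤ |D³u| + C|Du||D²u|²` and
`|D³u| ≤ (1+|Du|²)² |∇A|_g + C|Du||D²u|²` for graphs, with a dimensional constant `C`. -/
theorem stmt_4 (n m : ℕ) : ∃ C > (0:ℝ),
    ∀ (Ω : Set (Fin n → ℝ)), IsOpen Ω →
    ∀ (u : (Fin n → ℝ) → (Fin m → ℝ)), ContDiffOn ℝ 3 u Ω →
    ∀ x ∈ Ω,
    ∀ (Du : Fin n → Fin m → ℝ),
      (∀ i a, Du i a = fderiv ℝ u x (Pi.single i 1) a) →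
    ∀ (D2u : Fin n → Fin n → Fin m → ℝ),
      (∀ i j a, D2u i j a =
        fderiv ℝ (fun y => fderiv ℝ u y (Pi.single i 1) a) x (Pi.single j 1)) →
    ∀ (D3u : Fin n → Fin n → Fin n → Fin m → ℝ),
      (∀ i j k a, D3u i j k a =
        fderiv ℝ (fun z =>
          fderiv ℝ (fun y => fderiv ℝ u y (Pi.single i 1) a) z (Pi.single j 1))
          x (Pi.single k 1)) →
    ∀ (g : Matrix (Fin n) (Fin n) ℝ),
      (∀ i j, g i j = (if i = j then (1:ℝ) else 0) + ∑ a, Du i a * Du j a) →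
    ∀ (gN : Matrix (Fin m) (Fin m) ℝ),
      (∀ a b, gN a b = (if a = b then (1:ℝ) else 0) + ∑ i, Du i a * Du i b) →
    ∀ (Γ : Fin n → Fin n → Fin n → ℝ),
      (∀ i j k, Γ i j k = ∑ l, g⁻¹ k l * ∑ a, D2u i j a * Du l a) →
    ∀ (ΓN : Fin n → Fin m → Fin m → ℝ),
      (∀ i a b, ΓN i a b = ∑ c, gN⁻¹ b c * ∑ k, D2u i k a * Du k c) →
    -- covariant derivative components h_{α ij,k}
    ∀ (A1 : Fin m → Fin n → Fin n → Fin n → ℝ),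
      (∀ a i j k, A1 a i j k = D3u i j k a
        + ∑ l, Γ k i l * D2u l j a + ∑ l, Γ k j l * D2u i l a
        + ∑ b, ΓN k a b * D2u i j b) →
    (Real.sqrt (∑ a, ∑ b, ∑ i, ∑ p, ∑ j, ∑ q, ∑ k, ∑ l,
        A1 a i j k * A1 b p q l * g⁻¹ i p * g⁻¹ j q * g⁻¹ k l * gN⁻¹ a b)
      ≤ Real.sqrt (∑ i, ∑ j, ∑ k, ∑ a, D3u i j k a ^ 2)
        + C * Real.sqrt (∑ i, ∑ a, Du i a ^ 2) * (∑ i, ∑ j, ∑ a, D2u i j a ^ 2)) ∧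
    (Real.sqrt (∑ i, ∑ j, ∑ k, ∑ a, D3u i j k a ^ 2)
      ≤ (1 + ∑ i, ∑ a, Du i a ^ 2) ^ 2 *
          Real.sqrt (∑ a, ∑ b, ∑ i, ∑ p, ∑ j, ∑ q, ∑ k, ∑ l,
            A1 a i j k * A1 b p q l * g⁻¹ i p * g⁻¹ j q * g⁻¹ k l * gN⁻¹ a b)
        + C * Real.sqrt (∑ i, ∑ a, Du i a ^ 2) * (∑ i, ∑ j, ∑ a, D2u i j a ^ 2)) := by
  classical
  refine ⟨3, by norm_num, ?_⟩
  intro Ω hΩ u hu x hx Du hDu D2u hD2u D3u hD3u g hg gN hgN Γ hΓ ΓN hΓN A1 hA1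
  set t := ∑ i, ∑ a, Du i a ^ 2 with htdef
  have ht : 0 ≤ t := by
    rw [htdef]; positivity
  have h1t : (0:ℝ) < 1 + t := by linarith
  set D2sq := ∑ i, ∑ j, ∑ a, D2u i j a ^ 2 with hD2sqdef
  have hD2 : 0 ≤ D2sq := by rw [hD2sqdef]; positivity
  -- metric bounds
  obtain ⟨hsymg, hglo, hghi⟩ := metric_bounds Du g hg
  obtain ⟨hupg, hdng, hmvg, AM, hAM⟩ := inv_bounds g hsymg t ht hglo hghi
  obtain ⟨hsymN, hNlo, hNhi⟩ := metric_bounds (fun a i => Du i a) gN hgN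
  have hNhi' : ∀ ξ : Fin m → ℝ, ξ ⬝ᵥ gN *ᵥ ξ ≤ (1 + t) * ∑ a, ξ a ^ 2 := by
    intro ξ
    have h := hNhi ξ
    have e : (∑ a : Fin m, ∑ i : Fin n, Du i a ^ 2) = t := Finset.sum_comm
    rw [e] at h
    exact h
  obtain ⟨hupN, hdnN, hmvN, AN, hAN⟩ := inv_bounds gN hsymN t ht hNlo hNhi'
  set lam := (1 + t)⁻¹ with hlamdef
  have hlam : 0 ≤ lam := by rw [hlamdef]; positivity
  have hlamE : lam * (1 + t) = 1 := by
    rw [hlamdef]; field_simp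
  -- double-sum quadratic form bounds for the inverses
  have hloM : ∀ v : Fin n → ℝ, lam * ∑ i, v i ^ 2 ≤ ∑ i, ∑ p, g⁻¹ i p * (v i * v p) := by
    intro v
    have h := hdng v
    rw [qf_expand2] at h
    calc lam * ∑ i, v i ^ 2
        ≤ lam * ((1 + t) * (∑ i, ∑ p, g⁻¹ i p * (v i * v p))) :=
          mul_le_mul_of_nonneg_left h hlam
      _ = ∑ i, ∑ p, g⁻¹ i p * (v i * v p) := by rw [← mul_assoc, hlamE, one_mul]
  have hhiM : ∀ v : Fin n → ℝ, ∑ i, ∑ p, g⁻¹ i p * (v i * v p) ≤ ∑ i, v i ^ 2 := by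
    intro v
    have h := hupg v
    rw [qf_expand2] at h
    exact h
  have hloN2 : ∀ v : Fin m → ℝ, lam * ∑ a, v a ^ 2 ≤ ∑ a, ∑ b, gN⁻¹ a b * (v a * v b) := by
    intro v
    have h := hdnN v
    rw [qf_expand2] at h
    calc lam * ∑ a, v a ^ 2
        ≤ lam * ((1 + t) * (∑ a, ∑ b, gN⁻¹ a b * (v a * v b))) :=
          mul_le_mul_of_nonneg_left h hlam
      _ = ∑ a, ∑ b, gN⁻¹ a b * (v a * v b) := by rw [← mul_assoc, hlamE, one_mul]
  have hhiN2 : ∀ v : Fin m → ℝ, ∑ a, ∑ b, gN⁻¹ a b * (v a * v b) ≤ ∑ a, v a ^ 2 := by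
    intro v
    have h := hupN v
    rw [qf_expand2] at h
    exact h
  obtain ⟨hKlo, hKhi⟩ := kron4 g⁻¹ gN⁻¹ AM AN hAM hAN lam hlam hloM hhiM hloN2 hhiN2 A1
  -- rewrite the statement's flat sum into the nested form
  have hQeq : (∑ a, ∑ b, ∑ i, ∑ p, ∑ j, ∑ q, ∑ k, ∑ l,
      A1 a i j k * A1 b p q l * g⁻¹ i p * g⁻¹ j q * g⁻¹ k l * gN⁻¹ a b)
      = ∑ a, ∑ b, gN⁻¹ a b * (∑ i, ∑ p, g⁻¹ i p * (∑ j, ∑ q, g⁻¹ j q *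
          (∑ k, ∑ l, g⁻¹ k l * (A1 a i j k * A1 b p q l)))) := by
    simp only [Finset.mul_sum]
    refine Finset.sum_congr rfl fun a _ => Finset.sum_congr rfl fun b _ =>
      Finset.sum_congr rfl fun i _ => Finset.sum_congr rfl fun p _ =>
      Finset.sum_congr rfl fun j _ => Finset.sum_congr rfl fun q _ =>
      Finset.sum_congr rfl fun k _ => Finset.sum_congr rfl fun l _ => by ring
  -- Christoffel bounds
  have hΓsq : (∑ i, ∑ j, ∑ k, Γ i j k ^ 2) ≤ t * D2sq := by
    have h := gamma_bound g⁻¹ hmvg (fun (s : Fin n × Fin n) a => D2u s.1 s.2 a) Du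
      (fun (s : Fin n × Fin n) k => Γ s.1 s.2 k) (fun s k => hΓ s.1 s.2 k)
    rw [Fintype.sum_prod_type] at h
    have e2 : (∑ s : Fin n × Fin n, ∑ a, D2u s.1 s.2 a ^ 2) = D2sq := by
      rw [hD2sqdef, Fintype.sum_prod_type]
    rw [e2] at h
    exact h
  have hΓNsq : (∑ k, ∑ a, ∑ b, ΓN k a b ^ 2) ≤ t * D2sq := by
    have h := gamma_bound gN⁻¹ hmvN (fun (s : Fin n × Fin m) k => D2u s.1 k s.2)
      (fun c k => Du k c) (fun (s : Fin n × Fin m) b => ΓN s.1 s.2 b) (fun s b => hΓN s.1 s.2 b)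
    have e1 : (∑ l : Fin m, ∑ a : Fin n, Du a l ^ 2) = t := by
      rw [htdef]; exact Finset.sum_comm
    rw [e1] at h
    have e2 : (∑ s : Fin n × Fin m, ∑ k, D2u s.1 k s.2 ^ 2) = D2sq := by
      rw [hD2sqdef, Fintype.sum_prod_type]
      exact Finset.sum_congr rfl fun i _ => Finset.sum_comm
    rw [e2] at h
    rw [Fintype.sum_prod_type] at h
    exact h
  -- bounds on the three correction tensors
  have hE1 : (∑ a, ∑ i, ∑ j, ∑ k, (∑ l, Γ k i l * D2u l j a) ^ 2) ≤ t * D2sq * D2sq := by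
    calc ∑ a, ∑ i, ∑ j, ∑ k, (∑ l, Γ k i l * D2u l j a) ^ 2
        ≤ ∑ a, ∑ i, ∑ j, ∑ k, (∑ l, Γ k i l ^ 2) * (∑ l, D2u l j a ^ 2) := by
          refine Finset.sum_le_sum fun a _ => Finset.sum_le_sum fun i _ =>
            Finset.sum_le_sum fun j _ => Finset.sum_le_sum fun k _ =>
            Finset.sum_mul_sq_le_sq_mul_sq Finset.univ _ _
      _ = (∑ k, ∑ i, ∑ l, Γ k i l ^ 2) * (∑ j, ∑ a, ∑ l, D2u l j a ^ 2) :=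
          sum4_factor1 (fun k i => ∑ l, Γ k i l ^ 2) (fun j a => ∑ l, D2u l j a ^ 2)
      _ ≤ t * D2sq * D2sq := by
          have e : (∑ j, ∑ a, ∑ l, D2u l j a ^ 2) = D2sq := by
            rw [hD2sqdef]
            calc ∑ j, ∑ a, ∑ l, D2u l j a ^ 2
                = ∑ j, ∑ l, ∑ a, D2u l j a ^ 2 :=
                  Finset.sum_congr rfl fun j _ => Finset.sum_comm
              _ = ∑ l, ∑ j, ∑ a, D2u l j a ^ 2 := Finset.sum_comm
          rw [e]
          exact mul_le_mul_of_nonneg_right hΓsq hD2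
  have hE2 : (∑ a, ∑ i, ∑ j, ∑ k, (∑ l, Γ k j l * D2u i l a) ^ 2) ≤ t * D2sq * D2sq := by
    calc ∑ a, ∑ i, ∑ j, ∑ k, (∑ l, Γ k j l * D2u i l a) ^ 2
        ≤ ∑ a, ∑ i, ∑ j, ∑ k, (∑ l, Γ k j l ^ 2) * (∑ l, D2u i l a ^ 2) := by
          refine Finset.sum_le_sum fun a _ => Finset.sum_le_sum fun i _ =>
            Finset.sum_le_sum fun j _ => Finset.sum_le_sum fun k _ =>
            Finset.sum_mul_sq_le_sq_mul_sq Finset.univ _ _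
      _ = (∑ k, ∑ j, ∑ l, Γ k j l ^ 2) * (∑ i, ∑ a, ∑ l, D2u i l a ^ 2) :=
          sum4_factor2 (fun k j => ∑ l, Γ k j l ^ 2) (fun i a => ∑ l, D2u i l a ^ 2)
      _ ≤ t * D2sq * D2sq := by
          have e : (∑ i, ∑ a, ∑ l, D2u i l a ^ 2) = D2sq := by
            rw [hD2sqdef]
            exact Finset.sum_congr rfl fun i _ => Finset.sum_comm
          rw [e]
          exact mul_le_mul_of_nonneg_right hΓsq hD2
  have hE3 : (∑ a, ∑ i, ∑ j, ∑ k, (∑ b, ΓN k a b * D2u i j b) ^ 2) ≤ t * D2sq * D2sq := by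
    calc ∑ a, ∑ i, ∑ j, ∑ k, (∑ b, ΓN k a b * D2u i j b) ^ 2
        ≤ ∑ a, ∑ i, ∑ j, ∑ k, (∑ b, ΓN k a b ^ 2) * (∑ b, D2u i j b ^ 2) := by
          refine Finset.sum_le_sum fun a _ => Finset.sum_le_sum fun i _ =>
            Finset.sum_le_sum fun j _ => Finset.sum_le_sum fun k _ =>
            Finset.sum_mul_sq_le_sq_mul_sq Finset.univ _ _
      _ = (∑ k, ∑ a, ∑ b, ΓN k a b ^ 2) * (∑ i, ∑ j, ∑ b, D2u i j b ^ 2) :=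
          sum4_factor3 (fun k a => ∑ b, ΓN k a b ^ 2) (fun i j => ∑ b, D2u i j b ^ 2)
      _ ≤ t * D2sq * D2sq := by
          have e : (∑ i, ∑ j, ∑ b, D2u i j b ^ 2) = D2sq := by rw [hD2sqdef]
          rw [e]
          exact mul_le_mul_of_nonneg_right hΓNsq hD2
  -- sqrt versions of the correction bounds
  have hsqrtE : ∀ S : ℝ, S ≤ t * D2sq * D2sq → Real.sqrt S ≤ Real.sqrt t * D2sq := by
    intro S hS
    calc Real.sqrt S ≤ Real.sqrt (t * D2sq * D2sq) := Real.sqrt_le_sqrt hS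
      _ = Real.sqrt t * D2sq := by
        rw [show t * D2sq * D2sq = t * D2sq ^ 2 by ring, Real.sqrt_mul ht,
          Real.sqrt_sq hD2]
  -- swap lemma for the D3u norm
  have hswap : (∑ a, ∑ i, ∑ j, ∑ k, D3u i j k a ^ 2)
      = ∑ i, ∑ j, ∑ k, ∑ a, D3u i j k a ^ 2 := by
    rw [Finset.sum_comm]
    refine Finset.sum_congr rfl fun i _ => ?_
    rw [Finset.sum_comm]
    exact Finset.sum_congr rfl fun j _ => Finset.sum_comm
  rw [hlamdef] at hKlo
  constructor
  · -- first inequality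
    rw [hQeq]
    have tri := N4_triangle4 A1 (fun a i j k => D3u i j k a)
      (fun a i j k => ∑ l, Γ k i l * D2u l j a)
      (fun a i j k => ∑ l, Γ k j l * D2u i l a)
      (fun a i j k => ∑ b, ΓN k a b * D2u i j b)
      (fun a i j k => hA1 a i j k)
    rw [hswap] at tri
    exact assemble1 _ _ _ _ _ _ _ _ hKhi tri (hsqrtE _ hE1) (hsqrtE _ hE2) (hsqrtE _ hE3)
  · -- second inequality
    rw [hQeq, ← hswap]
    have tri := N4_triangle4 (fun a i j k => D3u i j k a) A1
      (fun a i j k => -(∑ l, Γ k i l * D2u l j a))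
      (fun a i j k => -(∑ l, Γ k j l * D2u i l a))
      (fun a i j k => -(∑ b, ΓN k a b * D2u i j b))
      (fun a i j k => by rw [hA1 a i j k]; ring)
    simp only [neg_sq] at tri
    exact assemble2 _ _ _ _ _ _ _ _ (1 + t) h1t hKlo tri
      (hsqrtE _ hE1) (hsqrtE _ hE2) (hsqrtE _ hE3)
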